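/- Let T < ∞ and let λ, h, f : [0, T) → ℝ solve the cylinder soliton ODE system (λ > 0, λ' = −1 + λh², h' = h/λ − (3/2)h³, f' = (1/2)h²f) with h(0) ≠ 0 and λ(t) → 0 as t → T⁻. Then ∫₀^T h(s)² ds = +∞ (the improper integral diverges). -/

import Mathlib

open MeasureTheory

/-- If the cylinder soliton ODE system has a solution on `[0, T)`, `T < ∞`, with
`h(0) ≠ 0` and `λ(t) → 0` as `t → T⁻`, then `∫₀^T h² = +∞`. -/
theorem stmt_19 (T : ℝ) (hT : 0 < T) (lam h f : ℝ → ℝ)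
    (hpos : ∀ t ∈ Set.Ico (0 : ℝ) T, 0 < lam t)
    (hlam : ∀ t ∈ Set.Ico (0 : ℝ) T,
      HasDerivWithinAt lam (-1 + lam t * (h t) ^ 2) (Set.Ico 0 T) t)
    (hh : ∀ t ∈ Set.Ico (0 : ℝ) T,
      HasDerivWithinAt h (h t / lam t - (3 / 2) * (h t) ^ 3) (Set.Ico 0 T) t)
    (hf : ∀ t ∈ Set.Ico (0 : ℝ) T,
      HasDerivWithinAt f ((1 / 2) * (h t) ^ 2 * f t) (Set.Ico 0 T) t)
    (hh0 : h 0 ≠ 0)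
    (hlim : Filter.Tendsto lam (nhdsWithin T (Set.Ico 0 T)) (nhds 0)) :
    ∫⁻ s in Set.Ico (0 : ℝ) T, ENNReal.ofReal ((h s) ^ 2) = ⊤ := by
  set S : Set ℝ := Set.Ico (0 : ℝ) T with hSdef
  have h0S : (0 : ℝ) ∈ S := ⟨le_refl 0, hT⟩
  have hlamc : ContinuousOn lam S := fun t ht => (hlam t ht).continuousWithinAt
  have hhc : ContinuousOn h S := fun t ht => (hh t ht).continuousWithinAt
  have hh2c : ContinuousOn (fun s => h s ^ 2) S := hhc.pow 2
  -- Step 1: `lam t + t` is monotone, hence `lam t ≤ T - t`.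
  have hmono : MonotoneOn (fun t => lam t + t) S := by
    apply monotoneOn_of_hasDerivWithinAt_nonneg (convex_Ico 0 T)
      (f' := fun x => -1 + lam x * h x ^ 2 + 1)
    · exact hlamc.add continuousOn_id
    · intro x hx
      exact ((hlam x (interior_subset hx)).mono interior_subset).add
        (hasDerivWithinAt_id x _)
    · intro x hx
      have := (hpos x (interior_subset hx)).le
      nlinarith [sq_nonneg (h x)]
  have hlamle : ∀ t ∈ S, lam t ≤ T - t := by
    intro t ht
    have hne : (nhdsWithin T S).NeBot := by
      refine mem_closure_iff_nhdsWithin_neBot.mp ?_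
      rw [hSdef, closure_Ico hT.ne]
      exact ⟨hT.le, le_refl T⟩
    have htend : Filter.Tendsto (fun t' => lam t' + t') (nhdsWithin T S) (nhds (0 + T)) :=
      hlim.add (Filter.tendsto_id.mono_left nhdsWithin_le_nhds)
    have hev : ∀ᶠ t' in nhdsWithin T S, lam t + t ≤ lam t' + t' := by
      filter_upwards [self_mem_nhdsWithin,
        (eventually_ge_nhds ht.2).filter_mono nhdsWithin_le_nhds] with t' ht' hle
      exact hmono ht ht' hle
    have := ge_of_tendsto htend hev
    linarith
  -- Step 2: the conservation law for `w = lam * h ^ 2`.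
  set w : ℝ → ℝ := fun s => lam s * h s ^ 2 with hwdef
  set H : ℝ → ℝ := fun t => ∫ s in (0 : ℝ)..t, h s ^ 2 with hHdef
  have key : ∀ u ∈ S, (1 - 2 * w u) * Real.exp (2 * H u) = 1 - 2 * w 0 := by
    intro u hu
    rcases eq_or_lt_of_le hu.1 with h0u | h0u
    · simp [hHdef, ← h0u]
    have hsub : Set.Icc (0 : ℝ) u ⊆ S := fun x hx => ⟨hx.1, lt_of_le_of_lt hx.2 hu.2⟩
    -- derivative of `H` on `Icc 0 u`
    have hHd : ∀ t ∈ Set.Icc (0 : ℝ) u, HasDerivWithinAt H (h t ^ 2) (Set.Icc 0 u) t := by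
      intro t ht
      haveI : Fact (t ∈ Set.Icc (0 : ℝ) u) := ⟨ht⟩
      have hint : IntervalIntegrable (fun s => h s ^ 2) volume 0 t := by
        apply ContinuousOn.intervalIntegrable
        apply hh2c.mono
        intro x hx
        rw [Set.uIcc_of_le ht.1] at hx
        exact hsub ⟨hx.1, le_trans hx.2 ht.2⟩
      have hmeas : StronglyMeasurableAtFilter (fun s => h s ^ 2)
          (nhdsWithin t (Set.Icc (0:ℝ) u)) volume :=
        ⟨Set.Icc 0 u, self_mem_nhdsWithin,
          ((hh2c.mono hsub).aestronglyMeasurable measurableSet_Icc)⟩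
      exact intervalIntegral.integral_hasDerivWithinAt_right hint hmeas
        ((hh2c.mono hsub) t ht)
    -- derivative of `w` on `Icc 0 u`
    have hwd : ∀ t ∈ Set.Icc (0 : ℝ) u,
        HasDerivWithinAt w (h t ^ 2 * (1 - 2 * w t)) (Set.Icc 0 u) t := by
      intro t ht
      have hlt : HasDerivWithinAt lam (-1 + lam t * h t ^ 2) (Set.Icc 0 u) t :=
        (hlam t (hsub ht)).mono hsub
      have hht : HasDerivWithinAt h (h t / lam t - (3 / 2) * h t ^ 3) (Set.Icc 0 u) t :=
        (hh t (hsub ht)).mono hsub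
      have := hlt.fun_mul (hht.fun_pow 2)
      refine this.congr_deriv ?_
      have hl0 : lam t ≠ 0 := (hpos t (hsub ht)).ne'
      field_simp [hwdef]
      ring
    -- derivative of `z = (1 - 2w) exp (2H)` is zero
    set z : ℝ → ℝ := fun s => (1 - 2 * w s) * Real.exp (2 * H s) with hzdef
    have hzd : ∀ t ∈ Set.Icc (0 : ℝ) u, HasDerivWithinAt z 0 (Set.Icc 0 u) t := by
      intro t ht
      have he : HasDerivWithinAt (fun s => Real.exp (2 * H s))
          (Real.exp (2 * H t) * (2 * h t ^ 2)) (Set.Icc 0 u) t :=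
        by have := (Real.hasDerivAt_exp (2 * H t)).comp_hasDerivWithinAt t
             ((hHd t ht).const_mul 2); exact this
      have hw1 : HasDerivWithinAt (fun s => 1 - 2 * w s)
          (0 - 2 * (h t ^ 2 * (1 - 2 * w t))) (Set.Icc 0 u) t :=
        (hasDerivWithinAt_const t _ (1:ℝ)).sub ((hwd t ht).const_mul 2)
      have := hw1.fun_mul he
      refine this.congr_deriv ?_
      ring
    have hu0 : (0:ℝ) ∈ Set.Icc (0:ℝ) u := ⟨le_refl 0, h0u.le⟩
    have huu : u ∈ Set.Icc (0:ℝ) u := ⟨h0u.le, le_refl u⟩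
    have hconst : z u = z 0 := by
      refine (convex_Icc (0:ℝ) u).is_const_of_fderivWithin_eq_zero
        (𝕜 := ℝ) (fun x hx => ((hzd x hx).differentiableWithinAt)) ?_ huu hu0
      intro x hx
      have hud : UniqueDiffWithinAt ℝ (Set.Icc (0:ℝ) u) x := uniqueDiffOn_Icc h0u x hx
      have := (hzd x hx).hasFDerivWithinAt.fderivWithin hud
      rw [this]
      refine ContinuousLinearMap.ext fun y => ?_
      simp
    have hz0 : z 0 = 1 - 2 * w 0 := by simp [hzdef, hHdef]
    rw [← hz0, ← hconst]
  -- Step 3: lower bound on `w`.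
  have hw0 : 0 < w 0 := by
    have := hpos 0 h0S
    have h2 : 0 < h 0 ^ 2 := by positivity
    exact mul_pos this h2
  set c : ℝ := min (w 0) (1 / 2) with hcdef
  have hc : 0 < c := lt_min hw0 (by norm_num)
  have hHnonneg : ∀ t ∈ S, 0 ≤ H t := by
    intro t ht
    exact intervalIntegral.integral_nonneg ht.1 fun s _ => sq_nonneg _
  have hwge : ∀ t ∈ S, c ≤ w t := by
    intro t ht
    have hkey := key t ht
    have hexp1 : 1 ≤ Real.exp (2 * H t) := by
      have := hHnonneg t ht
      have : 0 ≤ 2 * H t := by linarith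
      exact Real.one_le_exp this
    rcases le_or_gt (w 0) (1 / 2) with h1 | h1
    · -- `1 - 2 w 0 ≥ 0` : then `w t ≥ w 0`
      have hnum : 0 ≤ 1 - 2 * w 0 := by linarith
      have : c ≤ w 0 := min_le_left _ _
      nlinarith [Real.exp_pos (2 * H t)]
    · -- `1 - 2 w 0 < 0` : then `w t ≥ 1/2`
      have hnum : 1 - 2 * w 0 < 0 := by linarith
      have hlt : (1 - 2 * w t) * Real.exp (2 * H t) < 0 := by rw [hkey]; exact hnum
      have hE : 0 < Real.exp (2 * H t) := Real.exp_pos _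
      have : 1 - 2 * w t < 0 := by nlinarith
      have hch : c ≤ 1 / 2 := min_le_right _ _
      linarith
  -- Step 4: pointwise lower bound `c / (T - s) ≤ h s ^ 2`
  have hptwise : ∀ s ∈ S, c / (T - s) ≤ h s ^ 2 := by
    intro s hs
    have hls : 0 < lam s := hpos s hs
    have hTs : 0 < T - s := by have := hs.2; linarith
    have h1 : c / (T - s) ≤ c / lam s :=
      div_le_div_of_nonneg_left hc.le hls (hlamle s hs)
    have h2 : c / lam s ≤ w s / lam s := (div_le_div_iff_of_pos_right hls).mpr (hwge s hs)
    have h3 : w s / lam s = h s ^ 2 := by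
      rw [hwdef]
      field_simp
    calc c / (T - s) ≤ c / lam s := h1
      _ ≤ w s / lam s := h2
      _ = h s ^ 2 := h3
  -- Step 5: the integral of `c / (T - s)` over `[0, T)` diverges.
  have claim : ∀ M : ℝ, ENNReal.ofReal M ≤ ∫⁻ s in S, ENNReal.ofReal (h s ^ 2) := by
    intro M
    rcases le_or_gt M 0 with hM | hM
    · simp [ENNReal.ofReal_eq_zero.mpr hM]
    set r : ℝ := Real.exp (-M / c) with hrdef
    have hr0 : 0 < r := Real.exp_pos _
    have hr1 : r ≤ 1 := Real.exp_le_one_iff.mpr (by rw [neg_div]; nlinarith [div_pos hM hc])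
    set b : ℝ := T - T * r with hbdef
    have hb0 : 0 ≤ b := by nlinarith
    have hbT : b < T := by nlinarith
    have hTb : T - b = T * r := by rw [hbdef]; ring
    -- compute the interval integral of `c / (T - s)` on `[0, b]`
    have hderiv : ∀ s ∈ Set.uIcc (0:ℝ) b,
        HasDerivAt (fun s => -(c * Real.log (T - s))) (c / (T - s)) s := by
      intro s hs
      rw [Set.uIcc_of_le hb0] at hs
      have hTs : 0 < T - s := by have := hs.2; linarith
      have hd1 : HasDerivAt (fun s : ℝ => T - s) (-1) s := by
        simpa using (hasDerivAt_id s).const_sub T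
      have hd2 : HasDerivAt (fun s : ℝ => Real.log (T - s)) ((T - s)⁻¹ * (-1)) s :=
        (Real.hasDerivAt_log hTs.ne').comp s hd1
      have := (hd2.const_mul c).fun_neg
      refine this.congr_deriv ?_
      field_simp
    have hcont : ContinuousOn (fun s => c / (T - s)) (Set.uIcc (0:ℝ) b) := by
      rw [Set.uIcc_of_le hb0]
      apply ContinuousOn.div continuousOn_const (by fun_prop)
      intro x hx
      have := hx.2
      have : 0 < T - x := by linarith [hbT]
      exact this.ne'
    have hintb : IntervalIntegrable (fun s => c / (T - s)) volume 0 b :=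
      hcont.intervalIntegrable
    have hval : ∫ s in (0:ℝ)..b, c / (T - s) = M := by
      rw [intervalIntegral.integral_eq_sub_of_hasDerivAt hderiv hintb]
      rw [hTb, Real.log_mul hT.ne' hr0.ne', hrdef, Real.log_exp]
      have : c ≠ 0 := hc.ne'
      field_simp
      ring
    -- compare with the lintegral
    have hIoc : Set.Ioc (0:ℝ) b ⊆ S := fun x hx => ⟨hx.1.le, lt_of_le_of_lt hx.2 hbT⟩
    calc ENNReal.ofReal M
        = ENNReal.ofReal (∫ s in Set.Ioc (0:ℝ) b, c / (T - s)) := by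
          rw [← hval, intervalIntegral.integral_of_le hb0]
      _ = ∫⁻ s in Set.Ioc (0:ℝ) b, ENNReal.ofReal (c / (T - s)) := by
          apply ofReal_integral_eq_lintegral_ofReal
          · exact hintb.1
          · refine (ae_restrict_iff' measurableSet_Ioc).mpr (Filter.Eventually.of_forall ?_)
            intro x hx
            have hTx : 0 < T - x := by have := hx.2; linarith [hbT]
            positivity
      _ ≤ ∫⁻ s in Set.Ioc (0:ℝ) b, ENNReal.ofReal (h s ^ 2) := by
          apply setLIntegral_mono' measurableSet_Ioc
          intro x hx
          exact ENNReal.ofReal_le_ofReal (hptwise x (hIoc hx))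
      _ ≤ ∫⁻ s in S, ENNReal.ofReal (h s ^ 2) := lintegral_mono_set hIoc
  by_contra hne
  have h1 := claim ((∫⁻ s in S, ENNReal.ofReal (h s ^ 2)).toReal + 1)
  rw [ENNReal.ofReal_le_iff_le_toReal hne] at h1
  linarith
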